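/- Let t be a binary tree with n leaves, let 0 < α < 1, β = √(1 − α²), and set h(n) := (1/2)·log₂(n/2). For a state τ of t, let m(τ) be the number of internal vertices of t that have a strict ancestor assigned 1 by τ. Then ∑_{τ : m(τ) ≤ h(n)} α_τ² ≤ α^{2·h(n)}, where the sum ranges over all states τ of t with m(τ) ≤ h(n) and the right-hand side is a real power. -/
import Mathlib


open Classical

/-- Finite ordered rooted binary trees. -/
inductive BTree where
  | leaf : BTree
  | node : BTree → BTree → BTree
deriving DecidableEq

/-- Positions (vertices) in a binary tree: `false` = go to the left child,
`true` = go to the right child. -/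
abbrev Pos := List Bool

/-- The number of leaves of a binary tree. -/
def BTree.leaves : BTree → ℕ
  | .leaf => 1
  | .node l r => l.leaves + r.leaves

/-- The finite set of positions of internal vertices of a binary tree. -/
def BTree.internalVerts : BTree → Finset Pos
  | .leaf => ∅
  | .node l r =>
      insert ([] : Pos)
        ((l.internalVerts.image (List.cons false)) ∪
          (r.internalVerts.image (List.cons true)))

/-- A state of `t`: a function from the internal vertices of `t` to `{0,1}`. -/
abbrev BState (t : BTree) := { p : Pos // p ∈ t.internalVerts } → Fin 2

/-- `mval t τ` is the number of internal vertices of `t` that have a strict ancestor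
(a vertex whose position is a proper prefix) assigned `1` by the state `τ`. -/
noncomputable def mval (t : BTree) (τ : BState t) : ℕ :=
  (t.internalVerts.filter fun p =>
    ∃ q : { p : Pos // p ∈ t.internalVerts }, q.1 <+: p ∧ q.1 ≠ p ∧ τ q = 1).card

/-- `ataus α β t τ = α^(|τ⁻¹(0)|) * β^(|τ⁻¹(1)|)` for a state `τ` of `t`. -/
noncomputable def ataus (α β : ℝ) (t : BTree) (τ : BState t) : ℝ :=
  α ^ (Finset.univ.filter fun v => τ v = 0).card
    * β ^ (Finset.univ.filter fun v => τ v = 1).card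

def BTree.depth : BTree → ℕ
  | .leaf => 0
  | .node l r => max l.depth r.depth + 1

lemma BTree.one_le_leaves (t : BTree) : 1 ≤ t.leaves := by
  induction t with
  | leaf => simp [BTree.leaves]
  | node l r hl hr => simp only [BTree.leaves]; omega

lemma BTree.leaves_le_two_pow (t : BTree) : t.leaves ≤ 2 ^ t.depth := by
  induction t with
  | leaf => simp [BTree.leaves, BTree.depth]
  | node l r hl hr =>
      have h1 : 2 ^ l.depth ≤ 2 ^ max l.depth r.depth :=
        Nat.pow_le_pow_right (by norm_num) (le_max_left _ _)
      have h2 : 2 ^ r.depth ≤ 2 ^ max l.depth r.depth :=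
        Nat.pow_le_pow_right (by norm_num) (le_max_right _ _)
      simp only [BTree.leaves, BTree.depth, pow_succ]
      omega

lemma BTree.exists_path (t : BTree) : ∃ P : List Bool, P.length = t.depth ∧
    ∀ j < t.depth, P.take j ∈ t.internalVerts := by
  induction t with
  | leaf => exact ⟨[], rfl, by simp [BTree.depth]⟩
  | node l r hl hr =>
      obtain ⟨Pl, hPl, hml⟩ := hl
      obtain ⟨Pr, hPr, hmr⟩ := hr
      rcases le_total r.depth l.depth with hd | hd
      · refine ⟨false :: Pl, ?_, ?_⟩
        · simp [BTree.depth, hPl, max_eq_left hd]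
        · intro j hj
          cases j with
          | zero => simp [BTree.internalVerts]
          | succ j' =>
              have hj' : j' < l.depth := by
                simp only [BTree.depth, max_eq_left hd] at hj; omega
              have : Pl.take j' ∈ l.internalVerts := hml j' hj'
              simp only [List.take_succ_cons, BTree.internalVerts,
                Finset.mem_insert, Finset.mem_union, Finset.mem_image]
              exact Or.inr (Or.inl ⟨_, this, rfl⟩)
      · refine ⟨true :: Pr, ?_, ?_⟩
        · simp [BTree.depth, hPr, max_eq_right hd]
        · intro j hj
          cases j with
          | zero => simp [BTree.internalVerts]
          | succ j' =>
              have hj' : j' < r.depth := by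
                simp only [BTree.depth, max_eq_right hd] at hj; omega
              have : Pr.take j' ∈ r.internalVerts := hmr j' hj'
              simp only [List.take_succ_cons, BTree.internalVerts,
                Finset.mem_insert, Finset.mem_union, Finset.mem_image]
              exact Or.inr (Or.inr ⟨_, this, rfl⟩)

set_option maxHeartbeats 2000000 in
/-- Let `t` be a binary tree with `n` leaves, `0 < α < 1`,
`β = √(1 − α²)`, `h(n) = (1/2)·log₂(n/2)`. Then
`∑_{τ : m(τ) ≤ h(n)} α_τ² ≤ α^(2 h(n))`, the sum ranging over all states `τ` of `t`
with `m(τ) ≤ h(n)`, and the right-hand side being a real power. -/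
theorem stmt14 (α β : ℝ) (hα0 : 0 < α) (hα1 : α < 1)
    (hβ : β = Real.sqrt (1 - α ^ 2)) (t : BTree) (n : ℕ) (hn : t.leaves = n) :
    ∑ τ ∈ Finset.univ.filter
        (fun τ : BState t => (mval t τ : ℝ) ≤ (1 / 2) * Real.logb 2 ((n : ℝ) / 2)),
      (ataus α β t τ) ^ 2
      ≤ α ^ (2 * ((1 / 2) * Real.logb 2 ((n : ℝ) / 2))) := by
  have hn1 : 1 ≤ n := hn ▸ t.one_le_leaves
  set h : ℝ := (1 / 2) * Real.logb 2 ((n : ℝ) / 2) with hhdef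
  obtain ⟨P, hPlen, hPmem⟩ := t.exists_path
  set D := t.depth with hDdef
  -- basic facts about α, β
  have hβ0 : 0 ≤ β := hβ ▸ Real.sqrt_nonneg _
  have hβ2 : β ^ 2 = 1 - α ^ 2 := by rw [hβ]; exact Real.sq_sqrt (by nlinarith)
  have hα2nn : (0:ℝ) ≤ α ^ 2 := sq_nonneg α
  have hβ2nn : (0:ℝ) ≤ β ^ 2 := sq_nonneg β
  -- log facts
  have hnpos : (0:ℝ) < n := by exact_mod_cast hn1
  have hlogn : Real.logb 2 ((n : ℝ) / 2) = Real.logb 2 (n : ℝ) - 1 := by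
    rw [Real.logb_div (by positivity) (by norm_num), Real.logb_self_eq_one (by norm_num)]
  have hlogD : Real.logb 2 (n : ℝ) ≤ (D : ℝ) := by
    have h1 : (n : ℝ) ≤ (2:ℝ) ^ D := by
      have := t.leaves_le_two_pow
      rw [hn] at this
      exact_mod_cast this
    calc Real.logb 2 (n : ℝ) ≤ Real.logb 2 ((2:ℝ) ^ D) :=
          Real.logb_le_logb_of_le (by norm_num) hnpos h1
      _ = (D : ℝ) := by rw [← Real.rpow_natCast, Real.logb_rpow] <;> norm_num
  have hhn1 : -1 ≤ Real.logb 2 ((n : ℝ) / 2) := by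
    have hle : (1:ℝ)/2 ≤ (n:ℝ)/2 := by
      have : (1:ℝ) ≤ n := by exact_mod_cast hn1
      linarith
    calc (-1:ℝ) = Real.logb 2 ((1:ℝ)/2) := by
          rw [one_div, Real.logb_inv, Real.logb_self_eq_one] <;> norm_num
      _ ≤ _ := Real.logb_le_logb_of_le (by norm_num) (by norm_num) hle
  have hh1 : -1 ≤ h := by rw [hhdef]; linarith
  have h2h1D : 2 * h + 1 ≤ (D : ℝ) := by rw [hhdef, hlogn]; linarith
  set c : ℝ := (D : ℝ) - 1 - h with hcdef
  set k : ℕ := ⌈c⌉₊ with hkdef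
  have hkD : k ≤ D := Nat.ceil_le.mpr (by rw [hcdef]; linarith)
  have hhk : h ≤ (k : ℝ) := le_trans (by rw [hcdef]; linarith) (Nat.le_ceil c)
  have fin2 : ∀ x : Fin 2, ¬ x = 0 → x = 1 := by decide
  -- key: any τ with small mval is zero on the first k chain vertices
  have key : ∀ τ : BState t, (mval t τ : ℝ) ≤ h → ∀ j : ℕ, j < k →
      ∀ hmem : P.take j ∈ t.internalVerts, τ ⟨P.take j, hmem⟩ = 0 := by
    intro τ hτ j hj hmem
    by_contra hne
    have h1 : τ ⟨P.take j, hmem⟩ = 1 := fin2 _ hne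
    have hjD : j < D := lt_of_lt_of_le hj hkD
    have hjc : (j : ℝ) < c := Nat.lt_ceil.mp hj
    have hsub : (Finset.Ico (j+1) D).image P.take ⊆
        t.internalVerts.filter (fun p =>
          ∃ q : { p : Pos // p ∈ t.internalVerts }, q.1 <+: p ∧ q.1 ≠ p ∧ τ q = 1) := by
      intro p hp
      simp only [Finset.mem_image, Finset.mem_Ico] at hp
      obtain ⟨j', ⟨hj'1, hj'2⟩, rfl⟩ := hp
      refine Finset.mem_filter.mpr ⟨hPmem j' hj'2, ⟨⟨P.take j, hmem⟩, ?_, ?_, h1⟩⟩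
      · have heq : (P.take j').take j = P.take j := by
          rw [List.take_take]
          congr 1
          omega
        have hpre : List.take j (List.take j' P) <+: List.take j' P :=
          List.take_prefix _ _
        rwa [heq] at hpre
      · intro heq
        have := congrArg List.length heq
        rw [List.length_take, List.length_take, hPlen] at this
        omega
    have hcard : D - (j+1) ≤ mval t τ := by
      have hinj : Set.InjOn P.take (Finset.Ico (j+1) D) := by
        intro a ha b hb hab
        simp only [Finset.coe_Ico, Set.mem_Ico] at ha hb
        have := congrArg List.length hab
        rw [List.length_take, List.length_take, hPlen] at this
        omega
      calc D - (j+1) = (Finset.Ico (j+1) D).card := (Nat.card_Ico _ _).symm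
        _ = ((Finset.Ico (j+1) D).image P.take).card :=
            (Finset.card_image_of_injOn hinj).symm
        _ ≤ _ := Finset.card_le_card hsub
    have hle : ((D - (j+1) : ℕ) : ℝ) ≤ h := le_trans (by exact_mod_cast hcard) hτ
    rw [Nat.cast_sub (by omega)] at hle
    push_cast at hle
    rw [hcdef] at hjc
    linarith
  -- the forced-zero set
  set Zp : Finset Pos := (Finset.range k).image P.take with hZpdef
  have hZp_sub : ∀ p ∈ Zp, p ∈ t.internalVerts := by
    intro p hp
    simp only [hZpdef, Finset.mem_image, Finset.mem_range] at hp
    obtain ⟨j, hj, rfl⟩ := hp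
    exact hPmem j (lt_of_lt_of_le hj hkD)
  set Zs : Finset { p : Pos // p ∈ t.internalVerts } :=
    Zp.subtype (· ∈ t.internalVerts) with hZsdef
  have hZp_card : Zp.card = k := by
    rw [hZpdef, Finset.card_image_of_injOn, Finset.card_range]
    intro a ha b hb hab
    simp only [Finset.coe_range, Set.mem_Iio] at ha hb
    have := congrArg List.length hab
    rw [List.length_take, List.length_take, hPlen] at this
    omega
  have hZs_card : Zs.card = k := by
    rw [hZsdef, Finset.card_subtype, Finset.filter_true_of_mem hZp_sub, hZp_card]
  have hzero : ∀ τ : BState t, (mval t τ : ℝ) ≤ h →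
      ∀ v : { p : Pos // p ∈ t.internalVerts }, v ∈ Zs → τ v = 0 := by
    intro τ hτ v hv
    rw [hZsdef, Finset.mem_subtype] at hv
    simp only [hZpdef, Finset.mem_image, Finset.mem_range] at hv
    obtain ⟨j, hj, hjv⟩ := hv
    have hveq : v = ⟨P.take j, hjv ▸ v.2⟩ := Subtype.ext hjv.symm
    rw [hveq]
    exact key τ hτ j hj _
  -- weights
  set w : Fin 2 → ℝ := fun x => if x = 0 then α ^ 2 else β ^ 2 with hwdef
  set W : { p : Pos // p ∈ t.internalVerts } → Fin 2 → ℝ :=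
    fun v x => if v ∈ Zs ∧ x ≠ 0 then 0 else w x with hWdef
  have hWnn : ∀ v x, 0 ≤ W v x := by
    intro v x
    rw [hWdef]
    dsimp only
    split
    · rfl
    · rw [hwdef]; dsimp only; split
      · exact hα2nn
      · exact hβ2nn
  have hataus : ∀ τ : BState t, (ataus α β t τ) ^ 2 = ∏ v, w (τ v) := by
    intro τ
    have hfe : (Finset.univ.filter fun v => ¬ τ v = 0) =
        (Finset.univ.filter fun v => τ v = 1) := by
      apply Finset.filter_congr
      intro v _
      constructor
      · exact fin2 _
      · intro hv hv0; rw [hv0] at hv; exact absurd hv (by decide)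
    calc (ataus α β t τ) ^ 2
        = (α^2) ^ (Finset.univ.filter fun v => τ v = 0).card *
          (β^2) ^ (Finset.univ.filter fun v => τ v = 1).card := by
          rw [ataus]; ring
      _ = ∏ v, w (τ v) := by
          rw [show (∏ v, w (τ v)) = ∏ v, (if τ v = 0 then α^2 else β^2) from rfl,
            Finset.prod_ite (fun _ => α^2) (fun _ => β^2),
            Finset.prod_const, Finset.prod_const, hfe]
  calc ∑ τ ∈ Finset.univ.filter (fun τ : BState t => (mval t τ : ℝ) ≤ h),
        (ataus α β t τ) ^ 2
      = ∑ τ ∈ Finset.univ.filter (fun τ : BState t => (mval t τ : ℝ) ≤ h),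
        ∏ v, W v (τ v) := by
        refine Finset.sum_congr rfl fun τ hτ => ?_
        rw [hataus]
        have hτ' := (Finset.mem_filter.mp hτ).2
        refine Finset.prod_congr rfl fun v _ => ?_
        by_cases hv : v ∈ Zs
        · have h0 : τ v = 0 := hzero τ hτ' v hv
          rw [hWdef]
          simp [h0]
        · rw [hWdef]
          simp [hv]
    _ ≤ ∑ τ : BState t, ∏ v, W v (τ v) :=
        Finset.sum_le_sum_of_subset_of_nonneg (Finset.filter_subset _ _)
          (fun τ _ _ => Finset.prod_nonneg fun v _ => hWnn v (τ v))
    _ = ∏ v, ∑ x : Fin 2, W v x := by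
        rw [Finset.prod_univ_sum (fun _ => (Finset.univ : Finset (Fin 2))) W]
        simp [Fintype.piFinset_univ]
    _ = ∏ v : { p : Pos // p ∈ t.internalVerts }, (if v ∈ Zs then α^2 else 1) := by
        refine Finset.prod_congr rfl fun v _ => ?_
        rw [Fin.sum_univ_two]
        by_cases hv : v ∈ Zs
        · rw [hWdef, hwdef]
          simp [hv]
        · have e1 : ¬((1 : Fin 2) = 0) := by decide
          rw [hWdef, hwdef]
          simp only [hv, false_and, if_false]
          rw [if_pos trivial, if_neg e1]
          linarith [hβ2]
    _ = (α^2) ^ Zs.card := by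
        rw [Finset.prod_ite_mem, Finset.univ_inter, Finset.prod_const]
    _ ≤ α ^ (2 * h) := by
        have h1 : ((α^2) ^ Zs.card : ℝ) = α ^ (((2 * Zs.card : ℕ) : ℝ)) := by
          rw [Real.rpow_natCast, pow_mul]
        rw [h1, hZs_card]
        apply Real.rpow_le_rpow_of_exponent_ge hα0 hα1.le
        push_cast
        linarith
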